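/- arXiv:1907.10386 — 3 statements merged into one kernel-verified Lean document; each statement's English description precedes it below -/
import Mathlib

section
/- For pointed Σ-labelled rooted trees T1 and T2, T1 ≤ T2 (in the recursively defined preorder) if and only if there exists a homomorphism of pointed labelled rooted trees from T2 to T1. -/
inductive PreTree (α : Type) : Type
  | node : Bool → List (α × PreTree α) → PreTree α

namespace PreTree

variable {α : Type}

def mark : PreTree α → Bool
  | node b _ => b

def children : PreTree α → List (α × PreTree α)
  | node _ cs => cs

def le : PreTree α → PreTree α → Prop
  | node b₁ c₁, node b₂ c₂ =>
      (b₂ = true → b₁ = true) ∧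
      ∀ q, q ∈ c₂ → ∃ p, p ∈ c₁ ∧ p.1 = q.1 ∧ le p.2 q.2
termination_by _ t₂ => sizeOf t₂
decreasing_by
  have h := List.sizeOf_lt_of_mem ‹q ∈ c₂›
  obtain ⟨qa, qt⟩ := q
  simp at h ⊢
  omega

-- The reduced form of a tree: reduce all child subtrees, then for each
-- label keep only the `≤`-minimal attached subtrees.
open scoped Classical in
noncomputable def reduce : PreTree α → PreTree α
  | node b cs =>
      let cs' : List (α × PreTree α) := cs.attach.map fun p => (p.1.1, reduce p.1.2)
      node b (cs'.filter fun q =>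
        decide (∀ q' ∈ cs', q'.1 = q.1 → le q'.2 q.2 → le q.2 q'.2))
termination_by t => sizeOf t
decreasing_by
  have h := List.sizeOf_lt_of_mem p.2
  obtain ⟨⟨pa, pt⟩, hp⟩ := p
  simp at h ⊢
  omega

/-- A tree is reduced if it equals its reduced form. -/
def Reduced (T : PreTree α) : Prop := reduce T = T

/-- The number of marked (point) vertices of a tree. -/
def markCount : PreTree α → ℕ
  | node b cs => (cond b 1 0) + (cs.attach.map fun p => markCount p.1.2).sum
termination_by t => sizeOf t
decreasing_by
  have h := List.sizeOf_lt_of_mem p.2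
  obtain ⟨⟨pa, pt⟩, hp⟩ := p
  simp at h ⊢
  omega

/-- A pointed tree: exactly one vertex is marked as the point. -/
def Pointed (T : PreTree α) : Prop := markCount T = 1

/-- Remove all point marks. -/
def unmark : PreTree α → PreTree α
  | node _ cs => node false (cs.attach.map fun p => (p.1.1, unmark p.1.2))
termination_by t => sizeOf t
decreasing_by
  have h := List.sizeOf_lt_of_mem p.2
  obtain ⟨⟨pa, pt⟩, hp⟩ := p
  simp at h ⊢
  omega

/-- Graft the tree `S` onto the point of `T` (identifying the point of `T`
with the root of `S`); the marks of `S` determine the new point. -/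
def graft (S : PreTree α) : PreTree α → PreTree α
  | node b cs =>
      if b then node S.mark (cs ++ S.children)
      else node b (cs.attach.map fun p => (p.1.1, graft S p.1.2))
termination_by t => sizeOf t
decreasing_by
  have h := List.sizeOf_lt_of_mem p.2
  obtain ⟨⟨pa, pt⟩, hp⟩ := p
  simp at h ⊢
  omega

/-- Move the point of `T` to its root. -/
def pointAtRoot (T : PreTree α) : PreTree α := node true (unmark T).children

/-- Pointed tree concatenation `T ∘ S`. -/
noncomputable def concat (T S : PreTree α) : PreTree α := reduce (graft S T)

/-- The domain operation `D(T)` on pointed trees. -/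
noncomputable def domTree (T : PreTree α) : PreTree α := reduce (pointAtRoot T)

/-- The trivial pointed tree: one vertex, both root and point. -/
def trivialTree : PreTree α := node true []

/-- The two-vertex pointed tree with a single `a`-labelled edge, point at the child. -/
def arrow (a : α) : PreTree α := node false [(a, node true [])]


/-- Set-theoretic equality of trees (children lists regarded as sets). -/
def eqv : PreTree α → PreTree α → Prop
  | node b₁ c₁, node b₂ c₂ =>
      b₁ = b₂ ∧
      (∀ p, p ∈ c₁ → ∃ q, q ∈ c₂ ∧ p.1 = q.1 ∧ eqv p.2 q.2) ∧
      (∀ q, q ∈ c₂ → ∃ p : {x // x ∈ c₁}, p.1.1 = q.1 ∧ eqv p.1.2 q.2)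
termination_by t₁ _ => sizeOf t₁
decreasing_by
  · have h₁ := List.sizeOf_lt_of_mem ‹p ∈ c₁›
    obtain ⟨pa, pt⟩ := p
    simp at h₁ ⊢
    omega
  · have h₁ := List.sizeOf_lt_of_mem p.2
    obtain ⟨⟨pa, pt⟩, hp⟩ := p
    simp at h₁ ⊢
    omega


/-- The subtree of `T` at position `p` (a list of child indices), if it exists. -/
def subAt : List ℕ → PreTree α → Option (PreTree α)
  | [], t => some t
  | i :: is, node _ cs => (cs[i]?).bind fun p => subAt is p.2

/-- `p` is a vertex of `T`. -/
def IsVertex (T : PreTree α) (p : List ℕ) : Prop := ∃ t, subAt p T = some t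

/-- The vertex `p` of `T` is the point (is marked). -/
def IsPoint (T : PreTree α) (p : List ℕ) : Prop :=
  ∃ t, subAt p T = some t ∧ t.mark = true

/-- There is an `a`-labelled edge of `T` from vertex `p` (the parent) to
vertex `q` (the child). -/
def Edge (T : PreTree α) (a : α) (p q : List ℕ) : Prop :=
  ∃ c, subAt p T = some c ∧ ∃ i t, c.children[i]? = some (a, t) ∧ q = p ++ [i]

theorem root_isVertex (T : PreTree α) : IsVertex T [] := ⟨T, rfl⟩

/-- A homomorphism of pointed labelled rooted trees from `S` to `T`:
a map of vertices preserving the labelled edge relations, sending the root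
to the root and points to points. -/
def HomTree (S T : PreTree α) : Prop :=
  ∃ θ : List ℕ → List ℕ,
    θ [] = [] ∧
    (∀ p, IsVertex S p → IsVertex T (θ p)) ∧
    (∀ a p q, Edge S a p q → Edge T a (θ p) (θ q)) ∧
    (∀ p, IsPoint S p → IsPoint T (θ p))

/-- A homomorphism of the pointed tree `T`, viewed as a relational structure,
into the relational structure `(X, f)`, mapping the root of `T` to `x` and
the point of `T` to `y`. -/
def HomInto {X : Type} (T : PreTree α) (f : α → X → X → Prop) (x y : X) : Prop :=
  ∃ θ : List ℕ → X,
    θ [] = x ∧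
    (∀ a p q, Edge T a p q → f a (θ p) (θ q)) ∧
    (∀ p, IsPoint T p → θ p = y)


end PreTree

namespace FreeKAD

/-- Terms of the signature `{∘, 1, D}`. -/
inductive Term1 (α : Type) : Type
  | var : α → Term1 α
  | one : Term1 α
  | comp : Term1 α → Term1 α → Term1 α
  | dom : Term1 α → Term1 α

/-- Terms of the signature `{∘, +, *, 0, 1, D}` (Kleene algebra with domain). -/
inductive TermK (α : Type) : Type
  | var : α → TermK α
  | zero : TermK α
  | one : TermK α
  | comp : TermK α → TermK α → TermK α
  | add : TermK α → TermK α → TermK α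
  | star : TermK α → TermK α
  | dom : TermK α → TermK α

variable {α : Type}

/-- The relational interpretation of a `{∘, 1, D}`-term over a set `X`,
under an assignment `f` of binary relations on `X` to the variables. -/
def rinterp1 {X : Type} (f : α → X → X → Prop) : Term1 α → X → X → Prop
  | .var a => f a
  | .one => fun x y => x = y
  | .comp s t => fun x y => ∃ z, rinterp1 f s x z ∧ rinterp1 f t z y
  | .dom s => fun x y => x = y ∧ ∃ z, rinterp1 f s x z

/-- The relational interpretation of a `{∘, +, *, 0, 1, D}`-term over a set `X`,
under an assignment `f` of binary relations on `X` to the variables. -/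
def rinterpK {X : Type} (f : α → X → X → Prop) : TermK α → X → X → Prop
  | .var a => f a
  | .zero => fun _ _ => False
  | .one => fun x y => x = y
  | .comp s t => fun x y => ∃ z, rinterpK f s x z ∧ rinterpK f t z y
  | .add s t => fun x y => rinterpK f s x y ∨ rinterpK f t x y
  | .star s => Relation.ReflTransGen (rinterpK f s)
  | .dom s => fun x y => x = y ∧ ∃ z, rinterpK f s x z

/-- Composition of binary relations. -/
def relComp {X : Type} (R S : X → X → Prop) : X → X → Prop :=
  fun x y => ∃ z, R x z ∧ S z y

/-- Union of binary relations. -/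
def relUnion {X : Type} (R S : X → X → Prop) : X → X → Prop :=
  fun x y => R x y ∨ S x y

/-- The domain operation on binary relations. -/
def relDom {X : Type} (R : X → X → Prop) : X → X → Prop :=
  fun x y => x = y ∧ ∃ z, R x z

/-- The identity relation. -/
def relId {X : Type} : X → X → Prop := fun x y => x = y

/-- The empty relation. -/
def relEmpty {X : Type} : X → X → Prop := fun _ _ => False

end FreeKAD

namespace FreeKAD

open PreTree

variable {α : Type}

/-- The single-tree interpretation of `{∘, 1, D}`-terms. -/
noncomputable def interp1 : Term1 α → PreTree α
  | .var a => arrow a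
  | .one => trivialTree
  | .comp s t => concat (interp1 s) (interp1 t)
  | .dom s => domTree (interp1 s)

/-- The set of `≤`-maximal elements of a set of trees. -/
def maximalSet (K : Set (PreTree α)) : Set (PreTree α) :=
  {T | T ∈ K ∧ ∀ S ∈ K, le T S → le S T}

/-- Elementwise lifting of pointed tree concatenation to sets of trees. -/
def liftComp (K L : Set (PreTree α)) : Set (PreTree α) :=
  {U | ∃ T ∈ K, ∃ S ∈ L, U = concat T S}

/-- Elementwise lifting of the domain operation to sets of trees. -/
def liftDom (K : Set (PreTree α)) : Set (PreTree α) :=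
  {U | ∃ T ∈ K, U = domTree T}

/-- Iterated lifted concatenation: `K^0 = {trivial}`, `K^(i+1) = K^i ∘ K`. -/
def powC (K : Set (PreTree α)) : ℕ → Set (PreTree α)
  | 0 => {trivialTree}
  | i + 1 => liftComp (powC K i) K

/-- The standard tree interpretation of `{∘, +, *, 0, 1, D}`-terms. -/
def sinterp : TermK α → Set (PreTree α)
  | .var a => {arrow a}
  | .zero => ∅
  | .one => {trivialTree}
  | .comp s t => maximalSet (liftComp (sinterp s) (sinterp t))
  | .add s t => maximalSet (sinterp s ∪ sinterp t)
  | .star s => maximalSet (⋃ i : ℕ, powC (sinterp s) (i + 1))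
  | .dom s => maximalSet (liftDom (sinterp s))

/-- Equality of sets of trees, with trees compared as (hereditarily finite) sets. -/
def SetEqv (K L : Set (PreTree α)) : Prop :=
  (∀ T ∈ K, ∃ S ∈ L, eqv T S) ∧ (∀ S ∈ L, ∃ T ∈ K, eqv T S)

/-- A set of reduced pointed trees is regular if it is the standard tree
interpretation of some `{∘, +, *, 0, 1, D}`-term. -/
def Regular (L : Set (PreTree α)) : Prop := ∃ t : TermK α, L = sinterp t

/-- The set of reduced trees lying `≤`-below some member of `L`. -/
def down (L : Set (PreTree α)) : Set (PreTree α) :=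
  {T | Reduced T ∧ ∃ S ∈ L, le T S}

end FreeKAD

namespace PreTree

variable {α : Type}

instance : Nonempty (PreTree α) := ⟨node true []⟩

theorem subAt_cons' (i : ℕ) (p : List ℕ) (b : Bool) (cs : List (α × PreTree α)) :
    subAt (i :: p) (node b cs) = (cs[i]?).bind fun q => subAt p q.2 := rfl

theorem subAt_cons_of_get {i : ℕ} (p : List ℕ) (b : Bool) {cs : List (α × PreTree α)}
    {a : α} {t : PreTree α} (h : cs[i]? = some (a, t)) :
    subAt (i :: p) (node b cs) = subAt p t := by
  simp [subAt, h]

theorem subAt_append' (p q : List ℕ) (T : PreTree α) :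
    subAt (p ++ q) T = (subAt p T).bind (subAt q) := by
  induction p generalizing T with
  | nil => simp [subAt]
  | cons i p ih =>
      cases T with
      | node b cs =>
        cases h : cs[i]? with
        | none => simp [subAt_cons', h]
        | some pr => simp [subAt_cons', h, ih]

theorem edge_lift {b : Bool} {cs : List (α × PreTree α)} {i : ℕ} {a : α} {t : PreTree α}
    (h : cs[i]? = some (a, t)) {a' : α} {x y : List ℕ}
    (he : Edge t a' x y) : Edge (node b cs) a' (i :: x) (i :: y) := by
  obtain ⟨c, hc, m, t', hm, rfl⟩ := he
  exact ⟨c, by rw [subAt_cons_of_get _ _ h]; exact hc, m, t', hm, rfl⟩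

theorem edge_descend {b : Bool} {cs : List (α × PreTree α)} {i : ℕ} {a : α} {t : PreTree α}
    (h : cs[i]? = some (a, t)) {a' : α} {x : List ℕ} {q : List ℕ}
    (he : Edge (node b cs) a' (i :: x) q) :
    ∃ y, q = i :: y ∧ Edge t a' x y := by
  obtain ⟨c, hc, m, t', hm, rfl⟩ := he
  rw [subAt_cons_of_get _ _ h] at hc
  exact ⟨x ++ [m], rfl, c, hc, m, t', hm, rfl⟩

theorem isPoint_cons {b : Bool} {cs : List (α × PreTree α)} {i : ℕ} {a : α} {t : PreTree α}
    (h : cs[i]? = some (a, t)) (p : List ℕ) :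
    IsPoint (node b cs) (i :: p) ↔ IsPoint t p := by
  unfold IsPoint
  rw [subAt_cons_of_get _ _ h]

theorem isVertex_cons {b : Bool} {cs : List (α × PreTree α)} {i : ℕ} {a : α} {t : PreTree α}
    (h : cs[i]? = some (a, t)) (p : List ℕ) :
    IsVertex (node b cs) (i :: p) ↔ IsVertex t p := by
  unfold IsVertex
  rw [subAt_cons_of_get _ _ h]

theorem hom_to_le : ∀ (T₂ T₁ : PreTree α) (θ : List ℕ → List ℕ),
    θ [] = [] →
    (∀ a p q, Edge T₂ a p q → Edge T₁ a (θ p) (θ q)) →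
    (∀ p, IsPoint T₂ p → IsPoint T₁ (θ p)) →
    le T₁ T₂
  | node b₂ c₂, node b₁ c₁, θ, h0, hE, hP => by
    rw [le]
    constructor
    · intro hb
      have hpt : IsPoint (node b₂ c₂) [] := ⟨node b₂ c₂, rfl, hb⟩
      have := hP [] hpt
      rw [h0] at this
      obtain ⟨t, ht, hm⟩ := this
      simp [subAt] at ht
      subst ht
      exact hm
    · rintro ⟨a, t⟩ hq
      obtain ⟨i, hi⟩ := List.getElem?_of_mem hq
      have he0 : Edge (node b₂ c₂) a [] [i] := ⟨node b₂ c₂, rfl, i, t, hi, rfl⟩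
      have he1 := hE a [] [i] he0
      rw [h0] at he1
      obtain ⟨c, hc, j, t₁, hj, hθi⟩ := he1
      simp [subAt] at hc
      subst hc
      simp only [children] at hj
      simp only [List.nil_append] at hθi
      -- key invariant
      have key : ∀ p : List ℕ, IsVertex (node b₂ c₂) (i :: p) → ∃ r, θ (i :: p) = j :: r := by
        intro p
        induction p using List.reverseRecOn with
        | nil => exact fun _ => ⟨[], hθi⟩
        | append_singleton p' k ih =>
            rintro ⟨s, hs⟩
            have hs' : subAt ((i :: p') ++ [k]) (node b₂ c₂) = some s := hs
            rw [subAt_append'] at hs'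
            obtain ⟨c, hc, hck⟩ := Option.bind_eq_some_iff.mp hs'
            obtain ⟨b', cs'⟩ := c
            rcases hk : cs'[k]? with _ | ⟨a'', s'⟩ <;> simp [subAt, hk] at hck
            subst hck
            have hekind : Edge (node b₂ c₂) a'' (i :: p') ((i :: p') ++ [k]) :=
              ⟨node b' cs', hc, k, _, hk, rfl⟩
            obtain ⟨r, hr⟩ := ih ⟨node b' cs', hc⟩
            have := hE _ _ _ hekind
            obtain ⟨c', hc', m, t', hm, hq'⟩ := this
            refine ⟨r ++ [m], ?_⟩
            have : θ ((i :: p') ++ [k]) = θ (i :: p') ++ [m] := hq'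
            rw [hr] at this
            exact this
      have hvi : IsVertex (node b₂ c₂) [i] := ⟨t, subAt_cons_of_get [] b₂ hi⟩
      -- recursive application
      refine ⟨(a, t₁), List.mem_of_getElem? hj, rfl, ?_⟩
      refine hom_to_le t t₁ (fun p => (θ (i :: p)).tail) ?_ ?_ ?_
      · show (θ [i]).tail = []
        rw [hθi]
        rfl
      · intro a' x y he
        have hex : IsVertex t x := ⟨_, he.choose_spec.1⟩
        obtain ⟨c', hc', m, t', hm, rfl⟩ := he
        have hey : IsVertex t (x ++ [m]) := by
          refine ⟨t', ?_⟩
          rw [subAt_append', hc']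
          obtain ⟨b', cs'⟩ := c'
          simp only [children] at hm
          simp [subAt, hm]
        have heT : Edge (node b₂ c₂) a' (i :: x) (i :: (x ++ [m])) :=
          edge_lift hi ⟨c', hc', m, t', hm, rfl⟩
        have := hE _ _ _ heT
        obtain ⟨r, hr⟩ := key x ((isVertex_cons hi x).mpr hex)
        obtain ⟨r', hr'⟩ := key (x ++ [m]) ((isVertex_cons hi _).mpr hey)
        rw [hr, hr'] at this
        obtain ⟨y, hy, he'⟩ := edge_descend hj this
        show Edge t₁ a' (θ (i :: x)).tail (θ (i :: (x ++ [m]))).tail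
        rw [hr, hr']
        simp only [List.tail_cons]
        cases hy
        exact he'
      · intro x hx
        have hvx : IsVertex t x := ⟨_, hx.choose_spec.1⟩
        have := hP (i :: x) ((isPoint_cons hi x).mpr hx)
        obtain ⟨r, hr⟩ := key x ((isVertex_cons hi x).mpr hvx)
        rw [hr] at this
        show IsPoint t₁ (θ (i :: x)).tail
        rw [hr]
        simp only [List.tail_cons]
        exact (isPoint_cons hj r).mp this
termination_by T₂ => sizeOf T₂
decreasing_by
  have h := List.sizeOf_lt_of_mem hq
  simp at h ⊢
  omega

theorem le_to_hom : ∀ (T₂ T₁ : PreTree α), le T₁ T₂ → HomTree T₂ T₁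
  | node b₂ c₂, node b₁ c₁, hle => by
    rw [le] at hle
    obtain ⟨hb, hch⟩ := hle
    have H : ∀ (i : ℕ) (a : α) (t : PreTree α), c₂[i]? = some (a, t) → ∃ j : ℕ, ∃ t₁ : PreTree α, ∃ θ' : List ℕ → List ℕ,
        c₁[j]? = some (a, t₁) ∧ θ' [] = [] ∧
        (∀ p, IsVertex t p → IsVertex t₁ (θ' p)) ∧
        (∀ a' p q, Edge t a' p q → Edge t₁ a' (θ' p) (θ' q)) ∧
        (∀ p, IsPoint t p → IsPoint t₁ (θ' p)) := by
      intro i a t hi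
      have hmem : (a, t) ∈ c₂ := List.mem_of_getElem? hi
      obtain ⟨⟨pa, pt⟩, hp, hpa, hple⟩ := hch (a, t) hmem
      simp only at hpa
      subst hpa
      obtain ⟨j, hj⟩ := List.getElem?_of_mem hp
      obtain ⟨θ', h0, hV, hE, hP⟩ := le_to_hom t pt hple
      exact ⟨j, pt, θ', hj, h0, hV, hE, hP⟩
    choose! j t₁ θ' hj h0 hV hE hP using H
    refine ⟨fun l => match l with
      | [] => []
      | i :: p => match c₂[i]? with
        | some (a, t) => j i a t :: θ' i a t p
        | none => [], rfl, ?_, ?_, ?_⟩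
    · rintro (_ | ⟨i, p⟩) hv
      · exact ⟨node b₁ c₁, rfl⟩
      · obtain ⟨s, hs⟩ := hv
        rw [subAt_cons'] at hs
        obtain ⟨⟨a, t⟩, hi, hps⟩ := Option.bind_eq_some_iff.mp hs
        simp only [hi]
        have : IsVertex (t₁ i a t) (θ' i a t p) := hV i a t hi p ⟨s, hps⟩
        obtain ⟨s', hs'⟩ := this
        exact ⟨s', by rw [subAt_cons_of_get _ _ (hj i a t hi)]; exact hs'⟩
    · rintro a' (_ | ⟨i, p⟩) q he
      · obtain ⟨c, hc, m, t', hm, rfl⟩ := he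
        simp [subAt] at hc
        subst hc
        simp only [children] at hm
        simp only [List.nil_append, hm]
        refine ⟨node b₁ c₁, rfl, j m a' t', t₁ m a' t', ?_, ?_⟩
        · simpa [children] using hj m a' t' hm
        · simp [h0 m a' t' hm]
      · obtain ⟨c, hc, m, t', hm, rfl⟩ := he
        rw [subAt_cons'] at hc
        obtain ⟨⟨a, t⟩, hi, hpc⟩ := Option.bind_eq_some_iff.mp hc
        have het : Edge t a' p (p ++ [m]) := ⟨c, hpc, m, t', hm, rfl⟩
        have := hE i a t hi a' p (p ++ [m]) het
        show Edge (node b₁ c₁)  a'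
          (match c₂[i]? with
            | some (a, t) => j i a t :: θ' i a t p
            | none => [])
          (match c₂[i]? with
            | some (a, t) => j i a t :: θ' i a t (p ++ [m])
            | none => [])
        simp only [hi]
        exact edge_lift (hj i a t hi) this
    · rintro (_ | ⟨i, p⟩) hpt
      · obtain ⟨s, hs, hm⟩ := hpt
        simp [subAt] at hs
        subst hs
        exact ⟨node b₁ c₁, rfl, hb hm⟩
      · obtain ⟨s, hs, hm⟩ := hpt
        rw [subAt_cons'] at hs
        obtain ⟨⟨a, t⟩, hi, hps⟩ := Option.bind_eq_some_iff.mp hs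
        have : IsPoint (t₁ i a t) (θ' i a t p) := hP i a t hi p ⟨s, hps, hm⟩
        simp only [hi]
        exact (isPoint_cons (hj i a t hi) _).mpr this
termination_by T₂ => sizeOf T₂
decreasing_by
  have h := List.sizeOf_lt_of_mem hmem
  simp at h ⊢
  omega


end PreTree


namespace FreeKAD
open PreTree

/-- For pointed `Σ`-labelled rooted trees `T₁` and `T₂`,
`T₁ ≤ T₂` (in the recursively defined preorder) if and only if there exists a
homomorphism of pointed labelled rooted trees from `T₂` to `T₁`. -/
theorem le_iff_exists_hom {α : Type} (T₁ T₂ : PreTree α)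
    (h₁ : T₁.Pointed) (h₂ : T₂.Pointed) :
    le T₁ T₂ ↔ HomTree T₂ T₁ :=
  ⟨fun h => le_to_hom T₂ T₁ h, fun ⟨θ, h0, _, hE, hP⟩ => hom_to_le T₂ T₁ θ h0 hE hP⟩

end FreeKAD
end

section
/- The preorder ≤ is antisymmetric on reduced pointed Σ-labelled rooted trees, i.e. if T1 and T2 are reduced and T1 ≤ T2 and T2 ≤ T1, then T1 = T2; hence ≤ is a partial order on reduced pointed labelled rooted trees. -/
namespace PreTree
variable {α : Type}

theorem le_node_iff (b₁ b₂ : Bool) (c₁ c₂ : List (α × PreTree α)) :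
    le (node b₁ c₁) (node b₂ c₂) ↔
      ((b₂ = true → b₁ = true) ∧
       ∀ q ∈ c₂, ∃ p ∈ c₁, p.1 = q.1 ∧ le p.2 q.2) := by
  rw [le]

theorem attach_map_eq (cs : List (α × PreTree α)) :
    (cs.attach.map fun p => (p.1.1, reduce p.1.2)) = cs.map fun p => (p.1, reduce p.2) := by
  exact List.attach_map_val (l := cs) (f := fun p : α × PreTree α => (p.1, reduce p.2))

open scoped Classical in
theorem reduce_node (b : Bool) (cs : List (α × PreTree α)) :
    reduce (node b cs) =
      node b ((cs.map fun p => (p.1, reduce p.2)).filter fun q =>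
        decide (∀ q' ∈ cs.map fun p => (p.1, reduce p.2),
          q'.1 = q.1 → le q'.2 q.2 → le q.2 q'.2)) := by
  rw [reduce]
  simp only [attach_map_eq]

theorem le_refl' : ∀ T : PreTree α, le T T
  | node b cs => by
    rw [le_node_iff]
    exact ⟨fun h => h, fun q hq => ⟨q, hq, rfl, le_refl' q.2⟩⟩
termination_by T => sizeOf T
decreasing_by
  have h := List.sizeOf_lt_of_mem hq
  obtain ⟨qa, qt⟩ := q
  simp at h ⊢
  omega

theorem le_trans' : ∀ T₁ T₂ T₃ : PreTree α, le T₁ T₂ → le T₂ T₃ → le T₁ T₃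
  | node b₁ c₁, node b₂ c₂, node b₃ c₃, h12, h23 => by
    rw [le_node_iff] at h12 h23 ⊢
    refine ⟨fun h => h12.1 (h23.1 h), fun q hq => ?_⟩
    obtain ⟨p, hp, hl, hle⟩ := h23.2 q hq
    obtain ⟨r, hr, hl', hle'⟩ := h12.2 p hp
    exact ⟨r, hr, hl'.trans hl, le_trans' r.2 p.2 q.2 hle' hle⟩
termination_by _ _ T₃ => sizeOf T₃
decreasing_by
  have h := List.sizeOf_lt_of_mem hq
  obtain ⟨qa, qt⟩ := q
  simp at h ⊢
  omega

open scoped Classical in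
theorem reduce_reduced : ∀ T : PreTree α, Reduced (reduce T)
  | node b cs => by
    rw [Reduced, reduce_node b cs]
    set L := ((cs.map fun p => (p.1, reduce p.2)).filter fun q =>
        decide (∀ q' ∈ cs.map fun p => (p.1, reduce p.2),
          q'.1 = q.1 → le q'.2 q.2 → le q.2 q'.2)) with hL
    have hsub : ∀ q ∈ L, q ∈ cs.map fun p => (p.1, reduce p.2) := by
      intro q hq
      exact List.mem_of_mem_filter hq
    have hfix : ∀ q ∈ L, (q.1, reduce q.2) = q := by
      intro q hq
      obtain ⟨x, hx, hxe⟩ := List.mem_map.mp (hsub q hq)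
      have : reduce q.2 = q.2 := by
        rw [← hxe]
        exact reduce_reduced x.2
      rw [this]
    have hmap : (L.map fun p => (p.1, reduce p.2)) = L := by
      rw [show L.map (fun p : α × PreTree α => (p.1, reduce p.2)) = L.map id from
        List.map_congr_left hfix, List.map_id]
    rw [reduce_node, hmap]
    congr 1
    rw [List.filter_eq_self]
    intro q hq
    have hpred := (List.mem_filter.mp hq).2
    rw [decide_eq_true_iff] at hpred ⊢
    intro q' hq' h1 h2
    exact hpred q' (hsub q' hq') h1 h2
termination_by T => sizeOf T
decreasing_by
  have h := List.sizeOf_lt_of_mem hx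
  obtain ⟨xa, xt⟩ := x
  simp at h ⊢
  omega

open scoped Classical in
theorem reduced_filter {b : Bool} {cs : List (α × PreTree α)} (h : Reduced (node b cs)) :
    ((cs.map fun p => (p.1, reduce p.2)).filter fun q =>
        decide (∀ q' ∈ cs.map fun p => (p.1, reduce p.2),
          q'.1 = q.1 → le q'.2 q.2 → le q.2 q'.2)) = cs := by
  have := h
  rw [Reduced, reduce_node] at this
  injection this

theorem reduced_mem {b : Bool} {cs : List (α × PreTree α)} (h : Reduced (node b cs))
    {p : α × PreTree α} (hp : p ∈ cs) : Reduced p.2 := by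
  classical
  rw [← reduced_filter h] at hp
  obtain ⟨x, hx, hxe⟩ := List.mem_map.mp (List.mem_of_mem_filter hp)
  have : p.2 = reduce x.2 := by rw [← hxe]
  rw [this]
  exact reduce_reduced x.2

theorem reduced_min {b : Bool} {cs : List (α × PreTree α)} (h : Reduced (node b cs))
    {p p' : α × PreTree α} (hp : p ∈ cs) (hp' : p' ∈ cs) (hl : p'.1 = p.1)
    (hle : le p'.2 p.2) : le p.2 p'.2 := by
  classical
  rw [← reduced_filter h] at hp hp'
  have hpred := (List.mem_filter.mp hp).2
  rw [decide_eq_true_iff] at hpred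
  exact hpred p' (List.mem_of_mem_filter hp') hl hle

theorem eqv_node_iff (b₁ b₂ : Bool) (c₁ c₂ : List (α × PreTree α)) :
    eqv (node b₁ c₁) (node b₂ c₂) ↔
      (b₁ = b₂ ∧
       (∀ p, p ∈ c₁ → ∃ q, q ∈ c₂ ∧ p.1 = q.1 ∧ eqv p.2 q.2) ∧
       (∀ q, q ∈ c₂ → ∃ p : {x // x ∈ c₁}, p.1.1 = q.1 ∧ eqv p.1.2 q.2)) := by
  rw [eqv]

theorem le_antisymm_aux : ∀ T₁ T₂ : PreTree α, Reduced T₁ → Reduced T₂ →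
    le T₁ T₂ → le T₂ T₁ → eqv T₁ T₂
  | node b₁ c₁, node b₂ c₂, hr₁, hr₂, h₁₂, h₂₁ => by
    rw [le_node_iff] at h₁₂ h₂₁
    rw [eqv_node_iff]
    refine ⟨by cases b₁ <;> cases b₂ <;> simp_all, fun p hp => ?_, fun q hq => ?_⟩
    · obtain ⟨q, hq, hlq, hleq⟩ := h₂₁.2 p hp
      obtain ⟨p', hp', hlp', hlep'⟩ := h₁₂.2 q hq
      have hmin : le p.2 p'.2 := reduced_min hr₁ hp hp' (hlp'.trans hlq) (le_trans' _ _ _ hlep' hleq)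
      have h1 : le p.2 q.2 := le_trans' _ _ _ hmin hlep'
      exact ⟨q, hq, hlq.symm, le_antisymm_aux p.2 q.2 (reduced_mem hr₁ hp) (reduced_mem hr₂ hq) h1 hleq⟩
    · obtain ⟨p, hp, hlp, hlep⟩ := h₁₂.2 q hq
      obtain ⟨q', hq', hlq', hleq'⟩ := h₂₁.2 p hp
      have hmin : le q.2 q'.2 := reduced_min hr₂ hq hq' (hlq'.trans hlp) (le_trans' _ _ _ hleq' hlep)
      have h2 : le q.2 p.2 := le_trans' _ _ _ hmin hleq'
      exact ⟨⟨p, hp⟩, hlp, le_antisymm_aux p.2 q.2 (reduced_mem hr₁ hp) (reduced_mem hr₂ hq) hlep h2⟩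
termination_by T₁ T₂ => sizeOf T₁ + sizeOf T₂
decreasing_by
  all_goals {
    obtain ⟨pa, pt⟩ := p
    obtain ⟨qa, qt⟩ := q
    have h1 := List.sizeOf_lt_of_mem hp
    have h2 := List.sizeOf_lt_of_mem hq
    simp at h1 h2 ⊢
    omega }

end PreTree

namespace FreeKAD
open PreTree

/-- The preorder `≤` is antisymmetric on reduced pointed
`Σ`-labelled rooted trees: if `T₁` and `T₂` are reduced and `T₁ ≤ T₂` and
`T₂ ≤ T₁`, then `T₁ = T₂` (equality of trees, whose children collections are
sets, is `eqv`); hence `≤` is a partial order on reduced pointed trees. -/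
theorem le_antisymm_on_reduced {α : Type} (T₁ T₂ : PreTree α)
    (hr₁ : T₁.Reduced) (hr₂ : T₂.Reduced)
    (hp₁ : T₁.Pointed) (hp₂ : T₂.Pointed)
    (h₁₂ : le T₁ T₂) (h₂₁ : le T₂ T₁) :
    eqv T₁ T₂ := le_antisymm_aux T₁ T₂ hr₁ hr₂ h₁₂ h₂₁

end FreeKAD
end

section
/- For pointed Σ-labelled rooted trees T1 and T2, one has T1 ≤ T2 and T2 ≤ T1 if and only if the reduced form of T1 equals the reduced form of T2; that is, reduction selects a canonical member of every ≤-equivalence class. -/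
namespace FreeKAD
open PreTree
namespace PreTree
variable {α : Type}

theorem le_node_iff {b₁ b₂ : Bool} {c₁ c₂ : List (α × PreTree α)} :
    le (node b₁ c₁) (node b₂ c₂) ↔
      ((b₂ = true → b₁ = true) ∧
      ∀ q, q ∈ c₂ → ∃ p, p ∈ c₁ ∧ p.1 = q.1 ∧ le p.2 q.2) := by
  rw [le]

open Classical in
theorem reduce_node (b : Bool) (cs : List (α × PreTree α)) :
    reduce (node b cs) =
      node b (((cs.attach.map fun p => (p.1.1, reduce p.1.2))).filter fun q =>
        decide (∀ q' ∈ (cs.attach.map fun p => (p.1.1, reduce p.1.2)),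
          q'.1 = q.1 → le q'.2 q.2 → le q.2 q'.2)) := by
  rw [reduce]

theorem eqv_node_iff {b₁ b₂ : Bool} {c₁ c₂ : List (α × PreTree α)} :
    eqv (node b₁ c₁) (node b₂ c₂) ↔
      (b₁ = b₂ ∧
      (∀ p, p ∈ c₁ → ∃ q, q ∈ c₂ ∧ p.1 = q.1 ∧ eqv p.2 q.2) ∧
      (∀ q, q ∈ c₂ → ∃ p : {x // x ∈ c₁}, p.1.1 = q.1 ∧ eqv p.1.2 q.2)) := by
  rw [eqv]

theorem sizeOf_child_lt {cs : List (α × PreTree α)} {p : α × PreTree α} (h : p ∈ cs) (b : Bool) :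
    sizeOf p.2 < sizeOf (node b cs) := by
  have h := List.sizeOf_lt_of_mem h
  obtain ⟨pa, pt⟩ := p
  simp at h ⊢
  omega

theorem le_refl : ∀ T : PreTree α, le T T := by
  intro T
  induction T using PreTree.rec (motive_2 := fun l => ∀ p ∈ l, le p.2 p.2)
    (motive_3 := fun p => le p.2 p.2) with
  | node b cs ih =>
      rw [le_node_iff]
      exact ⟨fun h => h, fun q hq => ⟨q, hq, rfl, ih q hq⟩⟩
  | nil => rename_i p hp; exact absurd hp (List.not_mem_nil (a := p))
  | cons hd tl ihd itl =>
      rename_i p hp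
      rcases List.mem_cons.mp hp with h | h
      · subst h; exact ihd
      · exact itl p h
  | mk a t ih => exact ih

theorem le_trans : ∀ T₃ T₁ T₂ : PreTree α, le T₁ T₂ → le T₂ T₃ → le T₁ T₃ := by
  intro T₃
  induction T₃ using PreTree.rec
      (motive_2 := fun l => ∀ p ∈ l, ∀ T₁ T₂, le T₁ p.2 → le T₂ T₁ → le T₂ p.2)
      (motive_3 := fun p => ∀ T₁ T₂, le T₁ p.2 → le T₂ T₁ → le T₂ p.2) with
  | node b₃ c₃ ih =>
      intro T₁ T₂ h12 h23
      obtain ⟨b₁, c₁⟩ := T₁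
      obtain ⟨b₂, c₂⟩ := T₂
      rw [le_node_iff] at h12 h23 ⊢
      refine ⟨fun h => h12.1 (h23.1 h), fun q hq => ?_⟩
      obtain ⟨p, hp, hpl, hple⟩ := h23.2 q hq
      obtain ⟨r, hr, hrl, hrle⟩ := h12.2 p hp
      exact ⟨r, hr, hrl.trans hpl, ih q hq _ _ hple hrle⟩
  | nil =>
      rename_i p hp T₁ T₂ h1 h2
      exact absurd hp (List.not_mem_nil (a := p))
  | cons hd tl ihd itl =>
      rename_i p hp T₁ T₂ h1 h2
      rcases List.mem_cons.mp hp with h | h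
      · subst h; exact ihd T₁ T₂ h1 h2
      · exact itl p h T₁ T₂ h1 h2
  | mk a t ih =>
      rename_i T₁ T₂ h1 h2
      exact ih T₂ T₁ h2 h1

end PreTree

namespace PreTree
variable {α : Type}

theorem strongRec {motive : PreTree α → Prop}
    (h : ∀ T, (∀ S : PreTree α, sizeOf S < sizeOf T → motive S) → motive T) :
    ∀ T, motive T := by
  have key : ∀ n (T : PreTree α), sizeOf T ≤ n → motive T := by
    intro n
    induction n with
    | zero => intro T hT; exact h T fun S hS => by omega
    | succ n ih => intro T hT; exact h T fun S hS => ih S (by omega)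
  exact fun T => key (sizeOf T) T le_rfl

theorem countP_lt {β : Type} {l : List β} {p q : β → Bool}
    (h : ∀ y ∈ l, p y = true → q y = true)
    {t : β} (ht : t ∈ l) (hpt : ¬ p t = true) (hqt : q t = true) :
    l.countP p < l.countP q := by
  induction l with
  | nil => cases ht
  | cons hd tl ih =>
      rcases List.mem_cons.mp ht with rfl | hmem
      · rw [List.countP_cons, List.countP_cons]
        simp only [hqt, if_pos]
        rw [if_neg hpt]
        have : tl.countP p ≤ tl.countP q :=
          List.countP_mono_left fun y hy => h y (List.mem_cons_of_mem _ hy)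
        omega
      · rw [List.countP_cons, List.countP_cons]
        have := ih (fun y hy => h y (List.mem_cons_of_mem _ hy)) hmem
        have hpq := h hd List.mem_cons_self
        by_cases hp : p hd = true
        · rw [if_pos hp, if_pos (hpq hp)]; omega
        · rw [if_neg hp]
          split <;> omega

open Classical in
theorem exists_min {β : Type} (r : β → β → Prop)
    (hrefl : ∀ x, r x x) (htrans : ∀ x y z, r x y → r y z → r x z)
    (l : List β) : ∀ t ∈ l, ∃ m ∈ l, r m t ∧ ∀ x ∈ l, r x m → r m x := by
  have key : ∀ n, ∀ t ∈ l, l.countP (fun y => decide (r y t)) ≤ n →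
      ∃ m ∈ l, r m t ∧ ∀ x ∈ l, r x m → r m x := by
    intro n
    induction n with
    | zero =>
        intro t ht h0
        exfalso
        have : 0 < l.countP (fun y => decide (r y t)) :=
          List.countP_pos_iff.mpr ⟨t, ht, by simp [hrefl]⟩
        omega
    | succ n ih =>
        intro t ht hle
        by_cases hmin : ∀ x ∈ l, r x t → r t x
        · exact ⟨t, ht, hrefl t, hmin⟩
        · push_neg at hmin
          obtain ⟨x, hx, hxt, hntx⟩ := hmin
          have hlt : l.countP (fun y => decide (r y x)) < l.countP (fun y => decide (r y t)) := by
            refine countP_lt (fun y hy hyx => ?_) ht (by simp [hntx]) (by simp [hrefl])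
            simp only [decide_eq_true_eq] at hyx ⊢
            exact htrans y x t hyx hxt
          obtain ⟨m, hm, hmx, hmmin⟩ := ih x hx (by omega)
          exact ⟨m, hm, htrans m x t hmx hxt, hmmin⟩
  exact fun t ht => key (l.countP (fun y => decide (r y t))) t ht le_rfl

theorem exists_min_child (cs : List (α × PreTree α)) (a : α) (t : PreTree α)
    (h : (a, t) ∈ cs) :
    ∃ t', (a, t') ∈ cs ∧ le (reduce t') (reduce t) ∧
      ∀ t'', (a, t'') ∈ cs → le (reduce t'') (reduce t') → le (reduce t') (reduce t'') := by
  classical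
  set l : List (PreTree α) := cs.filterMap (fun p => if p.1 = a then some p.2 else none) with hl
  have hmem : ∀ s : PreTree α, s ∈ l ↔ (a, s) ∈ cs := by
    intro s
    simp only [hl, List.mem_filterMap]
    constructor
    · rintro ⟨⟨a', t'⟩, hp, he⟩
      by_cases h' : a' = a
      · simp [h'] at he; subst h'; subst he; exact hp
      · simp [h'] at he
    · intro hs; exact ⟨(a, s), hs, by simp⟩
  obtain ⟨m, hm, hmt, hmmin⟩ := exists_min (fun x y => le (reduce x) (reduce y))
    (fun x => le_refl _) (fun x y z h1 h2 => le_trans (reduce z) (reduce x) (reduce y) h1 h2) l t ((hmem t).mpr h)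
  exact ⟨m, (hmem m).mp hm, hmt, fun t'' ht'' => hmmin t'' ((hmem t'').mpr ht'')⟩

end PreTree

namespace PreTree
variable {α : Type}

theorem mem_reduce_children_iff {b : Bool} {cs : List (α × PreTree α)} {q : α × PreTree α} :
    q ∈ (reduce (node b cs)).children ↔
      ((∃ t, (q.1, t) ∈ cs ∧ q.2 = reduce t) ∧
       ∀ t', (q.1, t') ∈ cs → le (reduce t') q.2 → le q.2 (reduce t')) := by
  classical
  rw [reduce_node]
  simp only [children, List.mem_filter, List.mem_map, List.mem_attach, true_and,
    decide_eq_true_eq]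
  constructor
  · rintro ⟨⟨⟨⟨a', t⟩, hp⟩, he⟩, hmin⟩
    subst he
    refine ⟨⟨t, hp, rfl⟩, fun t' ht' hle => ?_⟩
    exact hmin ((a' : α), reduce t') ⟨⟨(a', t'), ht'⟩, rfl⟩ rfl hle
  · rintro ⟨⟨t, hp, he⟩, hmin⟩
    obtain ⟨a, x⟩ := q
    simp only at hp he hmin
    subst he
    refine ⟨⟨⟨(a, t), hp⟩, rfl⟩, ?_⟩
    rintro ⟨a', x'⟩ ⟨⟨⟨a'', t''⟩, hp''⟩, he''⟩ hlab hle
    simp only [Prod.mk.injEq] at he''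
    obtain ⟨rfl, rfl⟩ := he''
    simp only at hlab
    subst hlab
    exact hmin t'' hp'' hle

theorem reduce_mark {b : Bool} {cs : List (α × PreTree α)} :
    (reduce (node b cs)).mark = b := by
  rw [reduce_node]; rfl

theorem le_reduce : ∀ T : PreTree α, le T (reduce T) := by
  refine strongRec fun T ih => ?_
  obtain ⟨b, cs⟩ := T
  obtain ⟨b', L, hL⟩ : ∃ b' L, reduce (node b cs) = node b' L := ⟨b, _, reduce_node b cs⟩
  rw [hL, le_node_iff]
  have hb : b' = b := by have := reduce_mark (b := b) (cs := cs); rw [hL] at this; exact this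
  subst hb
  refine ⟨fun h => h, fun q hq => ?_⟩
  have hq' : q ∈ (reduce (node b' cs)).children := by rw [hL]; exact hq
  rw [mem_reduce_children_iff] at hq'
  obtain ⟨⟨t, hp, he⟩, _⟩ := hq'
  refine ⟨(q.1, t), hp, rfl, ?_⟩
  rw [he]
  exact ih t (sizeOf_child_lt hp b')

theorem reduce_le : ∀ T : PreTree α, le (reduce T) T := by
  refine strongRec fun T ih => ?_
  obtain ⟨b, cs⟩ := T
  obtain ⟨b', L, hL⟩ : ∃ b' L, reduce (node b cs) = node b' L := ⟨b, _, reduce_node b cs⟩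
  rw [hL, le_node_iff]
  have hb : b' = b := by have := reduce_mark (b := b) (cs := cs); rw [hL] at this; exact this
  subst hb
  refine ⟨fun h => h, ?_⟩
  rintro ⟨a, t⟩ hq
  obtain ⟨t', ht', hle, hmin⟩ := exists_min_child cs a t hq
  have hmem : ((a, reduce t') : α × PreTree α) ∈ (reduce (node b' cs)).children := by
    rw [mem_reduce_children_iff]
    exact ⟨⟨t', ht', rfl⟩, hmin⟩
  rw [hL] at hmem
  refine ⟨(a, reduce t'), hmem, rfl, ?_⟩
  exact le_trans t _ _ hle (ih t (sizeOf_child_lt hq b'))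

end PreTree

namespace PreTree
variable {α : Type}

theorem le_trans' {T₁ T₂ T₃ : PreTree α} (h1 : le T₁ T₂) (h2 : le T₂ T₃) : le T₁ T₃ :=
  le_trans T₃ T₁ T₂ h1 h2

theorem sizeOf_pos (T : PreTree α) : 0 < sizeOf T := by
  obtain ⟨b, cs⟩ := T; simp

theorem eqv_mutual_le : ∀ T S : PreTree α, eqv T S → le T S ∧ le S T := by
  refine strongRec fun T ih S h => ?_
  obtain ⟨b₁, c₁⟩ := T
  obtain ⟨b₂, c₂⟩ := S
  rw [eqv_node_iff] at h
  obtain ⟨hb, hf, hbk⟩ := h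
  subst hb
  rw [le_node_iff, le_node_iff]
  refine ⟨⟨fun h => h, ?_⟩, ⟨fun h => h, ?_⟩⟩
  · intro q hq
    obtain ⟨⟨p, hp⟩, hlab, heqv⟩ := hbk q hq
    exact ⟨p, hp, hlab, (ih p.2 (sizeOf_child_lt hp b₁) q.2 heqv).1⟩
  · intro q hq
    obtain ⟨q', hq', hlab, heqv⟩ := hf q hq
    exact ⟨q', hq', hlab.symm, (ih q.2 (sizeOf_child_lt hq b₁) q'.2 heqv).2⟩

theorem mutual_le_eqv_reduce :
    ∀ T S : PreTree α, le T S → le S T → eqv (reduce T) (reduce S) := by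
  have key : ∀ n (T S : PreTree α), sizeOf T + sizeOf S ≤ n →
      le T S → le S T → eqv (reduce T) (reduce S) := by
    intro n
    induction n with
    | zero =>
        intro T S h
        have := sizeOf_pos T
        omega
    | succ n ih =>
        intro T S hsize h12 h21
        obtain ⟨b₁, c₁⟩ := T
        obtain ⟨b₂, c₂⟩ := S
        rw [le_node_iff] at h12 h21
        have hb : b₁ = b₂ := by
          cases b₁ <;> cases b₂ <;> simp_all
        subst hb
        obtain ⟨d₁, L₁, hL₁⟩ : ∃ d L, reduce (node b₁ c₁) = node d L := ⟨b₁, _, reduce_node _ _⟩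
        obtain ⟨d₂, L₂, hL₂⟩ : ∃ d L, reduce (node b₁ c₂) = node d L := ⟨b₁, _, reduce_node _ _⟩
        have hd₁ : d₁ = b₁ := by
          have := reduce_mark (b := b₁) (cs := c₁); rw [hL₁] at this; exact this
        have hd₂ : d₂ = b₁ := by
          have := reduce_mark (b := b₁) (cs := c₂); rw [hL₂] at this; exact this
        rw [hL₁, hL₂, eqv_node_iff]
        refine ⟨hd₁.trans hd₂.symm, ?_, ?_⟩
        · -- forward
          intro p hp
          have hp' : p ∈ (reduce (node b₁ c₁)).children := by rw [hL₁]; exact hp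
          rw [mem_reduce_children_iff] at hp'
          obtain ⟨⟨s, hs, hps⟩, Ps⟩ := hp'
          obtain ⟨⟨a', t⟩, ht, hlab, hts⟩ := h21.2 (p.1, s) hs
          simp only at hlab hts
          subst hlab
          obtain ⟨t', ht', htt, hmin⟩ := exists_min_child c₂ p.1 t ht
          obtain ⟨⟨a'', s'⟩, hs', hlab', hst⟩ := h12.2 (p.1, t') ht'
          simp only at hlab' hst
          subst hlab'
          -- reduce s ≤ reduce s'
          have c1 : le (reduce s') (reduce s) :=
            le_trans' (reduce_le s') (le_trans' hst (le_trans' (le_reduce t')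
              (le_trans' htt (le_trans' (reduce_le t) (le_trans' hts (le_reduce s))))))
          have hback : le (reduce s) (reduce s') := by
            have := Ps s' hs'
            rw [hps] at this
            exact this c1
          -- mutual le of s and t'
          have hst' : le s t' :=
            le_trans' (le_reduce s) (le_trans' hback (le_trans' (reduce_le s') hst))
          have ht's : le t' s :=
            le_trans' (le_reduce t') (le_trans' htt (le_trans' (reduce_le t) hts))
          have hS1 : sizeOf s < sizeOf (node b₁ c₁) := sizeOf_child_lt hs b₁
          have hS2 : sizeOf t' < sizeOf (node b₁ c₂) := sizeOf_child_lt ht' b₁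
          have heqv : eqv (reduce s) (reduce t') := ih s t' (by omega) hst' ht's
          have hmem : ((p.1, reduce t') : α × PreTree α) ∈ (reduce (node b₁ c₂)).children := by
            rw [mem_reduce_children_iff]
            exact ⟨⟨t', ht', rfl⟩, hmin⟩
          rw [hL₂] at hmem
          refine ⟨(p.1, reduce t'), hmem, rfl, ?_⟩
          rw [hps]
          exact heqv
        · -- backward
          intro q hq
          have hq' : q ∈ (reduce (node b₁ c₂)).children := by rw [hL₂]; exact hq
          rw [mem_reduce_children_iff] at hq'
          obtain ⟨⟨t, ht, hqt⟩, Qt⟩ := hq'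
          obtain ⟨⟨a', s⟩, hs, hlab, hst⟩ := h12.2 (q.1, t) ht
          simp only at hlab hst
          subst hlab
          obtain ⟨s', hs', hss, hmin⟩ := exists_min_child c₁ q.1 s hs
          obtain ⟨⟨a'', t''⟩, ht'', hlab', hts⟩ := h21.2 (q.1, s') hs'
          simp only at hlab' hts
          subst hlab'
          have c1 : le (reduce t'') (reduce t) :=
            le_trans' (reduce_le t'') (le_trans' hts (le_trans' (le_reduce s')
              (le_trans' hss (le_trans' (reduce_le s) (le_trans' hst (le_reduce t))))))
          have hback : le (reduce t) (reduce t'') := by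
            have := Qt t'' ht''
            rw [hqt] at this
            exact this c1
          have hts' : le t s' :=
            le_trans' (le_reduce t) (le_trans' hback (le_trans' (reduce_le t'') hts))
          have hs't : le s' t :=
            le_trans' (le_reduce s') (le_trans' hss (le_trans' (reduce_le s) hst))
          have hS1 : sizeOf s' < sizeOf (node b₁ c₁) := sizeOf_child_lt hs' b₁
          have hS2 : sizeOf t < sizeOf (node b₁ c₂) := sizeOf_child_lt ht b₁
          have heqv : eqv (reduce s') (reduce t) := ih s' t (by omega) hs't hts'
          have hmem : ((q.1, reduce s') : α × PreTree α) ∈ (reduce (node b₁ c₁)).children := by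
            rw [mem_reduce_children_iff]
            exact ⟨⟨s', hs', rfl⟩, hmin⟩
          rw [hL₁] at hmem
          refine ⟨⟨(q.1, reduce s'), hmem⟩, rfl, ?_⟩
          rw [hqt]
          exact heqv
  exact fun T S => key (sizeOf T + sizeOf S) T S le_rfl

end PreTree

/-- For pointed `Σ`-labelled rooted trees `T₁` and `T₂`,
one has `T₁ ≤ T₂` and `T₂ ≤ T₁` if and only if the reduced form of `T₁`
equals the reduced form of `T₂` (equality of trees, whose children
collections are sets, is `eqv`): reduction selects a canonical member of
every `≤`-equivalence class. -/
theorem mutual_le_iff_reduce_eq {α : Type} (T₁ T₂ : PreTree α)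
    (hp₁ : T₁.Pointed) (hp₂ : T₂.Pointed) :
    (le T₁ T₂ ∧ le T₂ T₁) ↔ eqv (reduce T₁) (reduce T₂) := by
  constructor
  · rintro ⟨h1, h2⟩
    exact PreTree.mutual_le_eqv_reduce T₁ T₂ h1 h2
  · intro h
    obtain ⟨h1, h2⟩ := PreTree.eqv_mutual_le _ _ h
    exact ⟨PreTree.le_trans' (PreTree.le_reduce T₁) (PreTree.le_trans' h1 (PreTree.reduce_le T₂)),
      PreTree.le_trans' (PreTree.le_reduce T₂) (PreTree.le_trans' h2 (PreTree.reduce_le T₁))⟩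

end FreeKAD
end
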